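/- arXiv:1710.09752 — 2 statements merged into one kernel-verified Lean document; each statement's English description precedes it below -/
import Mathlib

section
/- Under the hypotheses of the previous statement, if additionally V(x) ≤ c₂ * ‖x‖² for all x ∈ E (a normed space), then ∑_{k=0}^∞ W(xₖ) ≤ (c₂/c₁) * ‖x₀‖². -/
theorem stmt_4 {E : Type*} [NormedAddCommGroup E] [NormedSpace ℝ E]
    (V W : E → ℝ) (hV : ∀ x, 0 ≤ V x) (hW : ∀ x, 0 ≤ W x)
    (c₁ c₂ : ℝ) (hc₁ : 0 < c₁) (hc₂ : 0 < c₂)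
    (hVbound : ∀ x, V x ≤ c₂ * ‖x‖ ^ 2) (x : ℕ → E)
    (hdiff : ∀ k, V (x (k + 1)) - V (x k) ≤ -c₁ * W (x k)) :
    ∑' k, W (x k) ≤ (c₂ / c₁) * ‖x 0‖ ^ 2 := by
  apply Real.tsum_le_of_sum_range_le (fun k => hW (x k))
  intro n
  have key : c₁ * ∑ i ∈ Finset.range n, W (x i) ≤ V (x 0) - V (x n) := by
    induction n with
    | zero => simp
    | succ m ih =>
      rw [Finset.sum_range_succ, mul_add]
      have := hdiff m
      linarith
  have h2 : c₁ * ∑ i ∈ Finset.range n, W (x i) ≤ c₂ * ‖x 0‖ ^ 2 := by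
    have := hV (x n); have := hVbound (x 0); linarith
  rw [div_mul_eq_mul_div, le_div_iff₀ hc₁]
  linarith [h2]
end

section
/- Let V : E → ℝ satisfy, for some continuous functions C₁, C₂ : ℝ → ℝ with C₂(1) ≤ C₁(1) < 1 and some β₀ > 1 with β₀ - C₁(β₀) > 0 and C₁(β₀) > 0: (a) T_β V(x) ≤ C₁(β) V(x) and T_β V(x) ≥ C₂(β) V(x) for β ∈ {1, β₀}, where T_β V(x) := V(β • f(x)) for a fixed map f (deterministic version of E[V(βf(x,ω))]); and (b) V(f(x)) - V(x) + ‖m(x)‖² ≤ 0 for all x. Set q₀ = C₁(β₀)(1 - C₂(1))/(β₀ - C₁(β₀)) and p₀ = q₀β₀/C₁(β₀), and define W = p₀ • V. Then (1/β₀) * W(β₀ • f(x)) - W(x) + ‖m(x)‖² ≤ 0 for all x. -/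
theorem stmt_13 {E F : Type*} [AddCommGroup E] [Module ℝ E]
    [NormedAddCommGroup F] [InnerProductSpace ℝ F]
    (f : E → E) (m : E → F) (V : E → ℝ) (hVnn : ∀ x, 0 ≤ V x)
    (c11 c21 c1b c2b β₀ q₀ p₀ : ℝ)
    (hc21 : c21 < 1) (hc : c21 ≤ c11) (hc11 : c11 < 1)
    (hβ₀ : 1 < β₀) (hβc : 0 < β₀ - c1b) (hc1b : 0 < c1b)
    (ha1 : ∀ x, c21 * V x ≤ V (f x) ∧ V (f x) ≤ c11 * V x)
    (ha2 : ∀ x, c2b * V x ≤ V (β₀ • f x) ∧ V (β₀ • f x) ≤ c1b * V x)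
    (hb : ∀ x, V (f x) - V x + ‖m x‖ ^ 2 ≤ 0)
    (hq₀ : q₀ = c1b * (1 - c21) / (β₀ - c1b))
    (hp₀ : p₀ = q₀ * β₀ / c1b) :
    ∀ x, (1 / β₀) * (p₀ * V (β₀ • f x)) - p₀ * V x + ‖m x‖ ^ 2 ≤ 0 := by
  intro x
  have hb0 : (0:ℝ) < β₀ := by linarith
  have hq : 0 ≤ q₀ := by
    rw [hq₀]
    exact div_nonneg (mul_nonneg hc1b.le (by linarith)) (by linarith)
  have h1 := (ha1 x).1
  have h2 := (ha2 x).2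
  have hVx := hVnn x
  have hpb : (1 / β₀) * (p₀ * V (β₀ • f x)) = q₀ / c1b * V (β₀ • f x) := by
    rw [hp₀]; field_simp
  have h3 : q₀ / c1b * V (β₀ • f x) ≤ q₀ / c1b * (c1b * V x) :=
    mul_le_mul_of_nonneg_left h2 (div_nonneg hq hc1b.le)
  have h4 : q₀ / c1b * (c1b * V x) = q₀ * V x := by field_simp
  have hqp : q₀ - p₀ = c21 - 1 := by
    rw [hp₀, hq₀]; field_simp; ring
  have h5 : (q₀ - p₀) * V x = q₀ * V x - p₀ * V x := by ring
  have h6 : (c21 - 1) * V x = c21 * V x - V x := by ring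
  have hbx := hb x
  rw [hpb]
  rw [hqp] at h5
  linarith
end
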